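/- Let 1 ≤ k ≤ m ≤ d and ε > 0. Then there exists δ = δ(ε) > 0 such that for every V ∈ Gr_m(d) and every orthonormal set {u_1,...,u_k} ⊆ ℝ^d with κ(V^⊥, span{u_1,...,u_k}) ≥ ε, one has ‖Λ^k π_V (u_1 ∧ ... ∧ u_k)‖ ≥ δ, where π_V is the orthogonal projection onto V composed with an isometric identification V ≅ ℝ^m, and Λ^k π_V is the induced map on k-th exterior powers. -/

import Mathlib

/-- The orthogonal projection onto a subspace `K` of `ℝ^d`, as an endomorphism of `ℝ^d`. -/
noncomputable def projL {d : ℕ} (K : Submodule ℝ (EuclideanSpace ℝ (Fin d))) :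
    EuclideanSpace ℝ (Fin d) →L[ℝ] EuclideanSpace ℝ (Fin d) :=
  K.subtypeL.comp (K.orthogonalProjectionOnto)

/-- `κ(V₁,V₂)`: the infimum over lines `L₁ ⊆ V₁`, `L₂ ⊆ V₂` of the projective distance
`‖P_{L₁} − P_{L₂}‖_op`. -/
noncomputable def kappa {d : ℕ} (V₁ V₂ : Submodule ℝ (EuclideanSpace ℝ (Fin d))) : ℝ :=
  ⨅ p : {L : Submodule ℝ (EuclideanSpace ℝ (Fin d)) // L ≤ V₁ ∧ Module.finrank ℝ L = 1} ×
      {L : Submodule ℝ (EuclideanSpace ℝ (Fin d)) // L ≤ V₂ ∧ Module.finrank ℝ L = 1},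
    ‖projL p.1.1 - projL p.2.1‖

lemma projL_span_unit {d : ℕ} {a : EuclideanSpace ℝ (Fin d)} (ha : ‖a‖ = 1)
    (x : EuclideanSpace ℝ (Fin d)) :
    projL (Submodule.span ℝ {a}) x = (inner ℝ a x : ℝ) • a := by
  exact Submodule.starProjection_unit_singleton ℝ ha x

lemma projL_span_sub_le {d : ℕ} {a b : EuclideanSpace ℝ (Fin d)} (ha : ‖a‖ = 1)
    (hb : ‖b‖ = 1) :
    ‖projL (Submodule.span ℝ {a}) - projL (Submodule.span ℝ {b})‖ ≤ 2 * ‖a - b‖ := by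
  apply ContinuousLinearMap.opNorm_le_bound _ (by positivity)
  intro x
  have : (projL (Submodule.span ℝ {a}) - projL (Submodule.span ℝ {b})) x
      = (inner ℝ a x : ℝ) • (a - b) + (inner ℝ (a - b) x : ℝ) • b := by
    simp only [ContinuousLinearMap.sub_apply, projL_span_unit ha, projL_span_unit hb,
      inner_sub_left]
    module
  rw [this]
  calc ‖(inner ℝ a x : ℝ) • (a - b) + (inner ℝ (a - b) x : ℝ) • b‖
      ≤ ‖(inner ℝ a x : ℝ) • (a - b)‖ + ‖(inner ℝ (a - b) x : ℝ) • b‖ := norm_add_le _ _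
    _ ≤ ‖a‖ * ‖x‖ * ‖a - b‖ + ‖a - b‖ * ‖x‖ * ‖b‖ := by
        rw [norm_smul, norm_smul]
        gcongr <;> exact norm_inner_le_norm _ _
    _ = 2 * ‖a - b‖ * ‖x‖ := by rw [ha, hb]; ring

lemma kappa_le {d : ℕ} {V₁ V₂ L₁ L₂ : Submodule ℝ (EuclideanSpace ℝ (Fin d))}
    (h1 : L₁ ≤ V₁) (hr1 : Module.finrank ℝ L₁ = 1)
    (h2 : L₂ ≤ V₂) (hr2 : Module.finrank ℝ L₂ = 1) :
    kappa V₁ V₂ ≤ ‖projL L₁ - projL L₂‖ := by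
  exact ciInf_le ⟨0, fun x hx => by obtain ⟨p, rfl⟩ := hx; exact norm_nonneg _⟩
    (⟨⟨L₁, h1, hr1⟩, ⟨L₂, h2, hr2⟩⟩ :
      {L : Submodule ℝ (EuclideanSpace ℝ (Fin d)) // L ≤ V₁ ∧ Module.finrank ℝ L = 1} ×
      {L : Submodule ℝ (EuclideanSpace ℝ (Fin d)) // L ≤ V₂ ∧ Module.finrank ℝ L = 1})

lemma proj_lower {d : ℕ} (V U : Submodule ℝ (EuclideanSpace ℝ (Fin d)))
    {ε : ℝ} (hε : 0 < ε) (hκ : ε ≤ kappa Vᗮ U)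
    {w : EuclideanSpace ℝ (Fin d)} (hwU : w ∈ U) (hw : ‖w‖ = 1) :
    min (ε / 4) (1 / 2) ≤ ‖projL V w‖ := by
  set t : ℝ := min (ε / 4) (1 / 2) with ht
  by_contra hcon
  push_neg at hcon
  have ht0 : 0 < t := lt_min (by linarith) (by norm_num)
  have ht2 : t ≤ 1 / 2 := min_le_right _ _
  -- q : the component of w in Vᗮ
  set q : EuclideanSpace ℝ (Fin d) := w - projL V w with hq
  have hqmem : q ∈ Vᗮ := Submodule.sub_starProjection_mem_orthogonal (K := V) w
  have hqw : ‖w - q‖ < t := by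
    simpa [hq] using hcon
  have hqn : 1 - t ≤ ‖q‖ := by
    have := abs_norm_sub_norm_le w q
    rw [abs_le] at this
    linarith [hqw.le, this.1]
  have hqpos : q ≠ 0 := by
    intro h0
    rw [h0, norm_zero] at hqn; linarith
  set b : EuclideanSpace ℝ (Fin d) := ‖q‖⁻¹ • q with hbdef
  have hbnorm : ‖b‖ = 1 := by
    rw [hbdef, norm_smul, norm_inv, norm_norm, inv_mul_cancel₀ (norm_ne_zero_iff.2 hqpos)]
  have hbmem : b ∈ Vᗮ := Submodule.smul_mem _ _ hqmem
  have habs : |‖q‖ - 1| < t := by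
    have h := abs_norm_sub_norm_le q w
    rw [hw, show ‖q - w‖ = ‖w - q‖ from norm_sub_rev q w] at h
    linarith [hqw]
  have hqb : ‖q - b‖ < t := by
    have heq : ‖q - b‖ = |‖q‖ - 1| := by
      rw [hbdef]
      have h2 : q - ‖q‖⁻¹ • q = (1 - ‖q‖⁻¹) • q := by module
      rw [h2, norm_smul, Real.norm_eq_abs,
        show |1 - ‖q‖⁻¹| * ‖q‖ = |(1 - ‖q‖⁻¹) * ‖q‖| by
          rw [abs_mul, abs_of_nonneg (norm_nonneg q)],
        show (1 - ‖q‖⁻¹) * ‖q‖ = ‖q‖ - 1 by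
          rw [sub_mul, one_mul, inv_mul_cancel₀ (norm_ne_zero_iff.2 hqpos)]]
    rw [heq]; exact habs
  have hbw : ‖b - w‖ < 2 * t := by
    calc ‖b - w‖ = ‖(q - w) - (q - b)‖ := by congr 1; abel
      _ ≤ ‖q - w‖ + ‖q - b‖ := norm_sub_le _ _
      _ < t + t := by rw [norm_sub_rev q w]; exact add_lt_add hqw hqb
      _ = 2 * t := by ring
  have hκle : kappa Vᗮ U ≤ ‖projL (Submodule.span ℝ {b}) - projL (Submodule.span ℝ {w})‖ := by
    apply kappa_le
    · exact (Submodule.span_singleton_le_iff_mem b Vᗮ).2 hbmem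
    · exact finrank_span_singleton (by intro h; rw [h, norm_zero] at hbnorm; norm_num at hbnorm)
    · exact (Submodule.span_singleton_le_iff_mem w U).2 hwU
    · exact finrank_span_singleton (by intro h; rw [h, norm_zero] at hw; norm_num at hw)
  have : kappa Vᗮ U < ε := by
    calc kappa Vᗮ U ≤ _ := hκle
      _ ≤ 2 * ‖b - w‖ := projL_span_sub_le hbnorm hw
      _ < 2 * (2 * t) := by linarith
      _ ≤ ε := by
        have : t ≤ ε / 4 := min_le_left _ _
        linarith
  linarith

/-- For `1 ≤ k ≤ m ≤ d` and `ε > 0` there is `δ = δ(ε) > 0` such that for every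
`V ∈ Gr_m(d)` and every orthonormal set `{u_1,...,u_k}` with
`κ(V^⊥, span{u_1,...,u_k}) ≥ ε`, one has `‖Λ^k π_V (u_1 ∧ ... ∧ u_k)‖ ≥ δ`; here the
norm of the wedge `(P_V u_1) ∧ ... ∧ (P_V u_k)` equals the square root of the Gram
determinant `det(⟨P_V u_i, P_V u_j⟩)_{i,j}`. -/
theorem exists_delta_wedge_proj_ge {d m k : ℕ} (hk : 1 ≤ k) (hkm : k ≤ m) (hmd : m ≤ d)
    {ε : ℝ} (hε : 0 < ε) :
    ∃ δ : ℝ, 0 < δ ∧ ∀ V : Submodule ℝ (EuclideanSpace ℝ (Fin d)),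
      Module.finrank ℝ V = m →
      ∀ u : Fin k → EuclideanSpace ℝ (Fin d), Orthonormal ℝ u →
        ε ≤ kappa Vᗮ (Submodule.span ℝ (Set.range u)) →
        δ ≤ Real.sqrt
          (Matrix.of fun i j : Fin k =>
            (inner ℝ (projL V (u i)) (projL V (u j)) : ℝ)).det := by
  set t : ℝ := min (ε / 4) (1 / 2) with ht
  have ht0 : 0 < t := lt_min (by linarith) (by norm_num)
  refine ⟨t ^ k, pow_pos ht0 k, fun V hV u hu hκ => ?_⟩
  set M : Matrix (Fin k) (Fin k) ℝ :=
    Matrix.of fun i j : Fin k => (inner ℝ (projL V (u i)) (projL V (u j)) : ℝ) with hM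
  have hHerm : M.IsHermitian := by
    unfold Matrix.IsHermitian
    ext i j
    simp only [hM, Matrix.conjTranspose_apply, Matrix.of_apply, star_trivial]
    exact real_inner_comm _ _
  -- each eigenvalue is at least t^2
  have heig : ∀ i : Fin k, t ^ 2 ≤ hHerm.eigenvalues i := by
    intro i
    set c : Fin k → ℝ := ⇑(hHerm.eigenvectorBasis i) with hc
    have hvnorm : ‖hHerm.eigenvectorBasis i‖ = 1 := hHerm.eigenvectorBasis.orthonormal.1 i
    have hvsum : ∑ j, c j * c j = 1 := by
      have h1 : (inner ℝ (hHerm.eigenvectorBasis i) (hHerm.eigenvectorBasis i) : ℝ) = 1 := by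
        rw [real_inner_self_eq_norm_sq, hvnorm]; norm_num
      rw [← h1, PiLp.inner_apply]
      simp [hc, RCLike.inner_apply, pow_two]
    set w : EuclideanSpace ℝ (Fin d) := ∑ j, c j • u j with hw
    have hwmem : w ∈ Submodule.span ℝ (Set.range u) :=
      Submodule.sum_mem _ fun j _ =>
        Submodule.smul_mem _ _ (Submodule.subset_span ⟨j, rfl⟩)
    have hwnorm : ‖w‖ = 1 := by
      have h1 : (inner ℝ w w : ℝ) = ∑ j, c j * c j := by
        rw [hw]
        simpa using hu.inner_sum (fun j => c j) (fun j => c j) Finset.univ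
      have h2 : ‖w‖ ^ 2 = 1 := by
        rw [← real_inner_self_eq_norm_sq, h1, hvsum]
      nlinarith [norm_nonneg w]
    -- quadratic form identity
    have hquad : (inner ℝ (projL V w) (projL V w) : ℝ) = dotProduct c (M.mulVec c) := by
      have hPw : projL V w = ∑ j, c j • projL V (u j) := by
        rw [hw, map_sum]; simp
      rw [hPw]
      simp only [sum_inner, inner_sum, real_inner_smul_left, real_inner_smul_right,
        dotProduct, Matrix.mulVec, hM, Matrix.of_apply]
      apply Finset.sum_congr rfl
      intro j _
      rw [Finset.mul_sum]
      apply Finset.sum_congr rfl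
      intro l _
      rw [real_inner_comm]
      ring
    have hcc : dotProduct c c = 1 := by
      rw [show dotProduct c c = ∑ j, c j * c j from rfl, hvsum]
    have hev : dotProduct c (M.mulVec c) = hHerm.eigenvalues i := by
      rw [hc, hHerm.mulVec_eigenvectorBasis i, dotProduct_smul]
      simp only [smul_eq_mul]
      rw [← hc, hcc, mul_one]
    have hproj : t ≤ ‖projL V w‖ := proj_lower V _ hε hκ hwmem hwnorm
    have hsq : t ^ 2 ≤ ‖projL V w‖ ^ 2 := by nlinarith
    rw [← hev, ← hquad, real_inner_self_eq_norm_sq]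
    exact hsq
  have hdet : (t ^ k) ^ 2 ≤ M.det := by
    rw [show ((t ^ k) ^ 2 : ℝ) = ∏ _i : Fin k, t ^ 2 by
      rw [Finset.prod_const, Finset.card_univ, Fintype.card_fin, ← pow_mul, ← pow_mul, mul_comm]]
    rw [hHerm.det_eq_prod_eigenvalues]
    exact Finset.prod_le_prod (fun i _ => by positivity) (fun i _ => heig i)
  calc (t ^ k : ℝ) = Real.sqrt ((t ^ k) ^ 2) := (Real.sqrt_sq (by positivity)).symm
    _ ≤ Real.sqrt M.det := Real.sqrt_le_sqrt hdet
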